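/- Let n ≥ 4. The distance signless Laplacian matrix of the star K_{1,2^{n-2}} (the co-centralizer graph of the quasidihedral group QD_{2^n}) has eigenvalue 2^{n-1} − 3 with multiplicity 2^{n-2} − 1 and eigenvalues (1/2)[(5·2^{n-2} − 3) ± √(9·2^{2n-4} − 14·2^{n-2} + 9)], each with multiplicity 1. -/

import Mathlib

open Polynomial
open Matrix

/-- The star graph `K_{1,n}` on `n+1` vertices. -/
def starGraph (n : ℕ) : SimpleGraph (Fin 1 ⊕ Fin n) :=
  completeBipartiteGraph (Fin 1) (Fin n)

/-- The distance matrix of a graph. -/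
noncomputable def distMatrix {V : Type*} [Fintype V] (G : SimpleGraph V) : Matrix V V ℝ :=
  Matrix.of fun u v => (G.dist u v : ℝ)

/-- The diagonal matrix of transmissions (sums of distances to all other vertices). -/
noncomputable def transMatrix {V : Type*} [Fintype V] [DecidableEq V] (G : SimpleGraph V) :
    Matrix V V ℝ :=
  Matrix.diagonal fun v => ∑ u, (G.dist v u : ℝ)

/-- The distance signless Laplacian matrix `D^Q = Tr + D`. -/
noncomputable def distSignlessLapMatrix {V : Type*} [Fintype V] [DecidableEq V]
    (G : SimpleGraph V) : Matrix V V ℝ :=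
  transMatrix G + distMatrix G

lemma star_dist_ll (N : ℕ) (a b : Fin 1) : (starGraph N).dist (.inl a) (.inl b) = 0 := by
  have : a = b := Subsingleton.elim a b
  simp [this]

lemma star_adj_lr (N : ℕ) (a : Fin 1) (j : Fin N) : (starGraph N).Adj (.inl a) (.inr j) := by
  simp [starGraph]

lemma star_dist_lr (N : ℕ) (a : Fin 1) (j : Fin N) : (starGraph N).dist (.inl a) (.inr j) = 1 :=
  SimpleGraph.dist_eq_one_iff_adj.mpr (star_adj_lr N a j)

lemma star_dist_rl (N : ℕ) (a : Fin 1) (j : Fin N) : (starGraph N).dist (.inr j) (.inl a) = 1 :=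
  SimpleGraph.dist_eq_one_iff_adj.mpr (star_adj_lr N a j).symm

lemma star_dist_rr (N : ℕ) (i j : Fin N) (hij : i ≠ j) :
    (starGraph N).dist (.inr i) (.inr j) = 2 := by
  let w : (starGraph N).Walk (.inr i) (.inr j) :=
    SimpleGraph.Walk.cons (star_adj_lr N 0 i).symm
      (SimpleGraph.Walk.cons (star_adj_lr N 0 j) SimpleGraph.Walk.nil)
  have hw : w.length = 2 := rfl
  have h2 : (starGraph N).dist (.inr i) (.inr j) ≤ 2 := hw ▸ SimpleGraph.dist_le w
  have h0 : (starGraph N).dist (.inr i) (.inr j) ≠ 0 := by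
    intro h
    rcases SimpleGraph.dist_eq_zero_iff_eq_or_not_reachable.mp h with h | h
    · exact hij (by simpa using h)
    · exact h ⟨w⟩
  have h1 : (starGraph N).dist (.inr i) (.inr j) ≠ 1 := by
    intro h
    have := SimpleGraph.dist_eq_one_iff_adj.mp h
    simp [starGraph] at this
  omega

lemma star_sum_rr (N : ℕ) (i : Fin N) :
    ∑ j, ((starGraph N).dist (.inr i) (.inr j) : ℝ) = 2 * N - 2 := by
  have h2 : ∀ j : Fin N, ((starGraph N).dist (.inr i) (.inr j) : ℝ)
      = 2 - (if j = i then 2 else 0) := by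
    intro j
    by_cases h : j = i
    · simp [h]
    · rw [star_dist_rr N i j (Ne.symm h)]
      simp [h]
  rw [Finset.sum_congr rfl fun j _ => h2 j, Finset.sum_sub_distrib]
  simp [Finset.sum_ite_eq]
  ring

lemma star_trans_l (N : ℕ) (a : Fin 1) :
    ∑ u, ((starGraph N).dist (.inl a) u : ℝ) = N := by
  rw [Fintype.sum_sum_type]
  simp [star_dist_ll, star_dist_lr]

lemma star_trans_r (N : ℕ) (i : Fin N) :
    ∑ u, ((starGraph N).dist (.inr i) u : ℝ) = 2 * N - 1 := by
  rw [Fintype.sum_sum_type]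
  have h1 : ∑ a : Fin 1, ((starGraph N).dist (.inr i) (.inl a) : ℝ) = 1 := by
    simp [star_dist_rl]
  have h2 : ∀ j : Fin N, ((starGraph N).dist (.inr i) (.inr j) : ℝ)
      = 2 - (if j = i then 2 else 0) := by
    intro j
    by_cases h : j = i
    · simp [h]
    · rw [star_dist_rr N i j (Ne.symm h)]
      simp [h]
  rw [h1]
  rw [Finset.sum_congr rfl fun j _ => h2 j, Finset.sum_sub_distrib]
  have hN : 1 ≤ N := Nat.one_le_iff_ne_zero.mpr (by rintro rfl; exact i.elim0)
  simp [Finset.sum_ite_eq]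
  ring

def Wmat (N : ℕ) : Matrix (Fin 1 ⊕ Fin N) (Fin 2) ℝ :=
  Matrix.of fun v k => if k = 0 then 1 else (if v = Sum.inl 0 then 1 else 0)

noncomputable def Smat (N : ℕ) : Matrix (Fin 2) (Fin 2) ℝ := !![-2, 1; 1, (N : ℝ) - 3]

lemma key_decomp (N : ℕ) (x : ℝ) :
    x • (1 : Matrix (Fin 1 ⊕ Fin N) (Fin 1 ⊕ Fin N) ℝ) - distSignlessLapMatrix (starGraph N)
      = (x - (2 * N - 3)) • 1 + Wmat N * (Smat N * (Wmat N)ᵀ) := by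
  ext u v
  have hmul : ∀ u v, (Wmat N * (Smat N * (Wmat N)ᵀ)) u v
      = -2 + (if u = Sum.inl 0 then 1 else 0) + (if v = Sum.inl 0 then 1 else 0)
        + ((N : ℝ) - 3) * (if u = Sum.inl 0 then 1 else 0) * (if v = Sum.inl 0 then 1 else 0) := by
    intro u v
    simp only [Matrix.mul_apply, Fin.sum_univ_two, Smat, Wmat, Matrix.transpose_apply,
      Matrix.of_apply, Matrix.cons_val', Matrix.cons_val_zero, Matrix.cons_val_one,
      Matrix.head_cons, Matrix.empty_val', Matrix.cons_val_fin_one, Matrix.head_fin_const]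
    norm_num
    by_cases hu : u = Sum.inl 0 <;> by_cases hv : v = Sum.inl 0 <;> simp [hu, hv] <;> ring
  rw [Matrix.sub_apply, Matrix.add_apply, hmul, Matrix.smul_apply, Matrix.smul_apply]
  simp only [distSignlessLapMatrix, transMatrix, distMatrix, Matrix.add_apply]
  rcases u with a | i <;> rcases v with b | j
  · have : a = b := Subsingleton.elim a b
    subst this
    simp [Matrix.diagonal_apply_eq, Matrix.one_apply_eq, star_trans_l, star_dist_ll,
      Subsingleton.elim a (0 : Fin 1)]
    simp [star_dist_lr]
    ring
  · have hab : (Sum.inl a : Fin 1 ⊕ Fin N) ≠ Sum.inr j := by simp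
    simp [Matrix.diagonal_apply_ne _ hab, Matrix.one_apply_ne hab, star_dist_lr,
      Subsingleton.elim a (0 : Fin 1)]
    norm_num
  · have hab : (Sum.inr i : Fin 1 ⊕ Fin N) ≠ Sum.inl b := by simp
    simp [Matrix.diagonal_apply_ne _ hab, Matrix.one_apply_ne hab, star_dist_rl,
      Subsingleton.elim b (0 : Fin 1)]
    norm_num
  · by_cases hij : i = j
    · subst hij
      simp [Matrix.diagonal_apply_eq, Matrix.one_apply_eq, star_dist_rl, star_sum_rr, SimpleGraph.dist_self]
      ring
    · have hab : (Sum.inr i : Fin 1 ⊕ Fin N) ≠ Sum.inr j := by simp [hij]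
      simp [Matrix.diagonal_apply_ne _ hab, Matrix.one_apply_ne hab, star_dist_rr N i j hij]

lemma eval_charpoly' {n : Type*} [DecidableEq n] [Fintype n] (M : Matrix n n ℝ) (x : ℝ) :
    (M.charpoly).eval x = (x • (1 : Matrix n n ℝ) - M).det := by
  rw [Matrix.charpoly, ← Polynomial.coe_evalRingHom, RingHom.map_det]
  congr 1
  ext i j
  by_cases h : i = j
  · subst h
    simp [Matrix.charmatrix_apply_eq, Matrix.one_apply_eq]
  · simp [Matrix.charmatrix_apply_ne _ _ _ h, Matrix.one_apply_ne h]

lemma star_WtW (N : ℕ) : (Wmat N)ᵀ * Wmat N = !![(N : ℝ) + 1, 1; 1, 1] := by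
  ext k l
  fin_cases k <;> fin_cases l <;>
    simp [Matrix.mul_apply, Wmat, Fintype.sum_sum_type, Finset.sum_ite_eq] <;> ring

lemma star_T (N : ℕ) :
    Smat N * ((Wmat N)ᵀ * Wmat N) = !![-2 * (N : ℝ) - 1, -1; 2 * N - 2, (N : ℝ) - 2] := by
  rw [star_WtW, Smat, Matrix.mul_fin_two]
  ext i j
  fin_cases i <;> fin_cases j <;> simp <;> ring

lemma star_charpoly (N : ℕ) (hN : 2 ≤ N) :
    (distSignlessLapMatrix (starGraph N)).charpoly
      = (X - C (2 * (N : ℝ) - 3)) ^ (N - 1)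
        * (X ^ 2 - C (5 * (N : ℝ) - 3) * X + C (4 * (N : ℝ) * ((N : ℝ) - 1))) := by
  apply Polynomial.eq_of_infinite_eval_eq
  apply Set.Infinite.mono (s := ({2 * (N : ℝ) - 3} : Set ℝ)ᶜ)
  swap
  · exact Set.Finite.infinite_compl (Set.finite_singleton _)
  intro x hx
  have hx' : x ≠ 2 * (N : ℝ) - 3 := by simpa using hx
  have ha : x - (2 * (N : ℝ) - 3) ≠ 0 := sub_ne_zero.mpr hx'
  simp only [Set.mem_setOf_eq]
  rw [eval_charpoly', key_decomp]
  have h1 : ((x - (2 * (N : ℝ) - 3)) • (1 : Matrix (Fin 1 ⊕ Fin N) (Fin 1 ⊕ Fin N) ℝ)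
        + Wmat N * (Smat N * (Wmat N)ᵀ))
      = (x - (2 * (N : ℝ) - 3)) •
        (1 + ((x - (2 * (N : ℝ) - 3))⁻¹ • Wmat N) * (Smat N * (Wmat N)ᵀ)) := by
    rw [smul_add, Matrix.smul_mul, smul_smul, mul_inv_cancel₀ ha, one_smul]
  rw [h1, Matrix.det_smul, Matrix.det_one_add_mul_comm]
  have h2 : (Smat N * (Wmat N)ᵀ) * ((x - (2 * (N : ℝ) - 3))⁻¹ • Wmat N)
      = (x - (2 * (N : ℝ) - 3))⁻¹ • !![-2 * (N : ℝ) - 1, -1; 2 * N - 2, (N : ℝ) - 2] := by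
    rw [Matrix.mul_smul, Matrix.mul_assoc, star_T]
  rw [h2, Matrix.det_fin_two]
  have hcard : Fintype.card (Fin 1 ⊕ Fin N) = N + 1 := by simp; omega
  rw [hcard]
  simp only [Matrix.add_apply, Matrix.smul_apply, Matrix.one_apply_eq, Matrix.one_apply_ne,
    Matrix.cons_val', Matrix.cons_val_zero, Matrix.cons_val_one, Matrix.head_cons,
    Matrix.empty_val', Matrix.cons_val_fin_one, Matrix.head_fin_const, smul_eq_mul,
    eval_mul, eval_pow, eval_sub, eval_add, eval_X, eval_C, eval_ofNat, Matrix.of_apply]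
  have hone : ((1 : Matrix (Fin 2) (Fin 2) ℝ) 0 1) = 0 := by simp
  have hone' : ((1 : Matrix (Fin 2) (Fin 2) ℝ) 1 0) = 0 := by simp
  rw [hone, hone']
  have hpow : (N : ℕ) + 1 = (N - 1) + 2 := by omega
  rw [hpow, pow_add]
  field_simp
  ring

lemma star_rootMult (N : ℕ) (hN : 4 ≤ N) :
    (distSignlessLapMatrix (starGraph N)).charpoly.rootMultiplicity (2 * (N : ℝ) - 3) = N - 1 ∧
    (distSignlessLapMatrix (starGraph N)).charpoly.rootMultiplicity
      ((1 / 2) * ((5 * (N : ℝ) - 3) + Real.sqrt (9 * (N : ℝ) ^ 2 - 14 * N + 9))) = 1 ∧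
    (distSignlessLapMatrix (starGraph N)).charpoly.rootMultiplicity
      ((1 / 2) * ((5 * (N : ℝ) - 3) - Real.sqrt (9 * (N : ℝ) ^ 2 - 14 * N + 9))) = 1 := by
  have hN4 : (4 : ℝ) ≤ (N : ℝ) := by exact_mod_cast hN
  obtain ⟨r₁, hr₁⟩ : ∃ r : ℝ,
      r = (1 / 2) * ((5 * (N : ℝ) - 3) + Real.sqrt (9 * (N : ℝ) ^ 2 - 14 * N + 9)) := ⟨_, rfl⟩
  obtain ⟨r₂, hr₂⟩ : ∃ r : ℝ,
      r = (1 / 2) * ((5 * (N : ℝ) - 3) - Real.sqrt (9 * (N : ℝ) ^ 2 - 14 * N + 9)) := ⟨_, rfl⟩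
  rw [← hr₁, ← hr₂]
  have hd0 : (0 : ℝ) < 9 * (N : ℝ) ^ 2 - 14 * N + 9 := by nlinarith
  have hsq : Real.sqrt (9 * (N : ℝ) ^ 2 - 14 * N + 9) ^ 2 = 9 * (N : ℝ) ^ 2 - 14 * N + 9 :=
    Real.sq_sqrt hd0.le
  have hsqpos : 0 < Real.sqrt (9 * (N : ℝ) ^ 2 - 14 * N + 9) := Real.sqrt_pos.mpr hd0
  have hsum : r₁ + r₂ = 5 * (N : ℝ) - 3 := by rw [hr₁, hr₂]; ring
  have hprod : r₁ * r₂ = 4 * (N : ℝ) * ((N : ℝ) - 1) := by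
    rw [hr₁, hr₂]
    linear_combination (-(1/4 : ℝ)) * hsq
  have hr12 : r₁ ≠ r₂ := by
    intro h
    have : r₁ - r₂ = Real.sqrt (9 * (N : ℝ) ^ 2 - 14 * N + 9) := by rw [hr₁, hr₂]; ring
    rw [h, sub_self] at this
    exact hsqpos.ne this
  have hqa : (2 * (N : ℝ) - 3 - r₁) * (2 * (N : ℝ) - 3 - r₂) = 5 * (N : ℝ) - 2 * (N : ℝ) ^ 2 := by
    linear_combination hprod - (2 * (N : ℝ) - 3) * hsum
  have hqa0 : (2 * (N : ℝ) - 3 - r₁) * (2 * (N : ℝ) - 3 - r₂) ≠ 0 := by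
    rw [hqa]; nlinarith
  have hne1 : (2 * (N : ℝ) - 3) ≠ r₁ := by
    intro h
    exact hqa0 (by rw [h, sub_self, zero_mul])
  have hne2 : (2 * (N : ℝ) - 3) ≠ r₂ := by
    intro h
    exact hqa0 (by rw [h, sub_self, mul_zero])
  have hquad : (X : ℝ[X]) ^ 2 - C (5 * (N : ℝ) - 3) * X + C (4 * (N : ℝ) * ((N : ℝ) - 1))
      = (X - C r₁) * (X - C r₂) := by
    rw [← hsum, ← hprod, C_add, C_mul]
    ring
  have hcp : (distSignlessLapMatrix (starGraph N)).charpoly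
      = (X - C (2 * (N : ℝ) - 3)) ^ (N - 1) * ((X - C r₁) * (X - C r₂)) := by
    rw [star_charpoly N (by omega), hquad]
  have h1 : ((X : ℝ[X]) - C (2 * (N : ℝ) - 3)) ^ (N - 1) ≠ 0 :=
    pow_ne_zero _ (Polynomial.X_sub_C_ne_zero _)
  have h2 : ((X : ℝ[X]) - C r₁) ≠ 0 := Polynomial.X_sub_C_ne_zero _
  have h3 : ((X : ℝ[X]) - C r₂) ≠ 0 := Polynomial.X_sub_C_ne_zero _
  have hmulne : ((X : ℝ[X]) - C (2 * (N : ℝ) - 3)) ^ (N - 1) * ((X - C r₁) * (X - C r₂)) ≠ 0 :=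
    mul_ne_zero h1 (mul_ne_zero h2 h3)
  have key : ∀ y : ℝ, (distSignlessLapMatrix (starGraph N)).charpoly.rootMultiplicity y
      = Polynomial.rootMultiplicity y (((X : ℝ[X]) - C (2 * (N : ℝ) - 3)) ^ (N - 1))
        + Polynomial.rootMultiplicity y ((X : ℝ[X]) - C r₁)
        + Polynomial.rootMultiplicity y ((X : ℝ[X]) - C r₂) := by
    intro y
    rw [hcp, Polynomial.rootMultiplicity_mul hmulne,
      Polynomial.rootMultiplicity_mul (mul_ne_zero h2 h3), add_assoc]
  have hpowzero : ∀ y : ℝ, y ≠ 2 * (N : ℝ) - 3 →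
      Polynomial.rootMultiplicity y (((X : ℝ[X]) - C (2 * (N : ℝ) - 3)) ^ (N - 1)) = 0 := by
    intro y hy
    apply Polynomial.rootMultiplicity_eq_zero
    simp [Polynomial.IsRoot, sub_ne_zero.mpr hy]
  refine ⟨?_, ?_, ?_⟩
  · rw [key, Polynomial.rootMultiplicity_X_sub_C_pow,
      Polynomial.rootMultiplicity_X_sub_C, Polynomial.rootMultiplicity_X_sub_C,
      if_neg hne1, if_neg hne2]
    omega
  · rw [key, hpowzero r₁ (Ne.symm hne1), Polynomial.rootMultiplicity_X_sub_C,
      Polynomial.rootMultiplicity_X_sub_C, if_pos rfl, if_neg hr12]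
  · rw [key, hpowzero r₂ (Ne.symm hne2), Polynomial.rootMultiplicity_X_sub_C,
      Polynomial.rootMultiplicity_X_sub_C, if_neg (Ne.symm hr12), if_pos rfl]

theorem quasidihedral_cocentralizer_distance_signless_laplacian_spectrum (n : ℕ) (hn : 4 ≤ n) :
    (distSignlessLapMatrix (starGraph (2 ^ (n - 2)))).charpoly.rootMultiplicity
      ((2 : ℝ) ^ (n - 1) - 3) = 2 ^ (n - 2) - 1 ∧
    (distSignlessLapMatrix (starGraph (2 ^ (n - 2)))).charpoly.rootMultiplicity
      ((1 / 2) * ((5 * (2 : ℝ) ^ (n - 2) - 3) +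
        Real.sqrt (9 * (2 : ℝ) ^ (2 * n - 4) - 14 * 2 ^ (n - 2) + 9))) = 1 ∧
    (distSignlessLapMatrix (starGraph (2 ^ (n - 2)))).charpoly.rootMultiplicity
      ((1 / 2) * ((5 * (2 : ℝ) ^ (n - 2) - 3) -
        Real.sqrt (9 * (2 : ℝ) ^ (2 * n - 4) - 14 * 2 ^ (n - 2) + 9))) = 1 := by
  have hN4 : 4 ≤ 2 ^ (n - 2) := by
    calc (4 : ℕ) = 2 ^ 2 := rfl
    _ ≤ 2 ^ (n - 2) := Nat.pow_le_pow_right (by norm_num) (by omega)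
  have hcast : ((2 ^ (n - 2) : ℕ) : ℝ) = (2 : ℝ) ^ (n - 2) := by push_cast; ring
  have e1 : (2 : ℝ) ^ (n - 1) - 3 = 2 * ((2 ^ (n - 2) : ℕ) : ℝ) - 3 := by
    rw [hcast, show n - 1 = (n - 2) + 1 by omega, pow_succ]; ring
  have e2 : 9 * (2 : ℝ) ^ (2 * n - 4) - 14 * 2 ^ (n - 2) + 9
      = 9 * ((2 ^ (n - 2) : ℕ) : ℝ) ^ 2 - 14 * ((2 ^ (n - 2) : ℕ) : ℝ) + 9 := by
    rw [hcast, show 2 * n - 4 = (n - 2) * 2 by omega, pow_mul]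
  have e3 : (5 : ℝ) * (2 : ℝ) ^ (n - 2) - 3 = 5 * ((2 ^ (n - 2) : ℕ) : ℝ) - 3 := by rw [hcast]
  obtain ⟨m1, m2, m3⟩ := star_rootMult (2 ^ (n - 2)) hN4
  exact ⟨by rw [e1]; exact m1, by rw [e2, e3]; exact m2, by rw [e2, e3]; exact m3⟩
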